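/- arXiv:2603.12656 — 4 statements merged into one kernel-verified Lean document; each statement's English description precedes it below -/
import Mathlib

section
/- Let n ≥ 1, M ∈ Sp(2n,ℝ), and ω ∈ ℂ with |ω| = 1. Then the complex number D_ω(M) = (−1)^{n−1} · (conj ω)^n · det(M − ω I_{2n}) is real, i.e., its imaginary part vanishes. -/
open Matrix

noncomputable section

/-- Index type for `2m × 2m` matrices, split into two halves. -/
abbrev Idx (m : ℕ) := Fin m ⊕ Fin m

/-- Square real matrices of size `2m`. -/
abbrev Mat (m : ℕ) := Matrix (Idx m) (Idx m) ℝ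

/-- The standard symplectic matrix `J_{2m} = [[0, -I_m],[I_m, 0]]`. -/
def Jmat (m : ℕ) : Mat m := Matrix.fromBlocks 0 (-1) 1 0

/-- `M ∈ Sp(2m, ℝ)`: `Mᵀ J M = J`. -/
def IsSymplectic {m : ℕ} (M : Mat m) : Prop := Mᵀ * Jmat m * M = Jmat m

lemma Jsq_general (m : ℕ) (R : Type*) [CommRing R] :
    (Matrix.fromBlocks 0 (-1) 1 0 : Matrix (Fin m ⊕ Fin m) (Fin m ⊕ Fin m) R) *
      Matrix.fromBlocks 0 (-1) 1 0 = -1 := by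
  have h1 : (-1 : Matrix (Fin m ⊕ Fin m) (Fin m ⊕ Fin m) R)
      = Matrix.fromBlocks (-1) 0 0 (-1) := by
    rw [← Matrix.fromBlocks_one, Matrix.fromBlocks_neg, neg_zero]
  rw [h1]
  simp [Matrix.fromBlocks_multiply]

lemma Jmat_sq (m : ℕ) : Jmat m * Jmat m = -1 := Jsq_general m ℝ

/-- The determinant of `[[X, Y],[-Y, X]]` is a complex norm-square, hence nonneg. -/
lemma det_special_block_nonneg {m : ℕ} (X Y : Matrix (Fin m) (Fin m) ℝ) :
    0 ≤ (Matrix.fromBlocks X Y (-Y) X).det := by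
  set f : ℝ →+* ℂ := Complex.ofRealHom with hf
  set X' : Matrix (Fin m) (Fin m) ℂ := X.map f
  set Y' : Matrix (Fin m) (Fin m) ℂ := Y.map f
  have hmap : ((Matrix.fromBlocks X Y (-Y) X).det : ℂ)
      = (Matrix.fromBlocks X' Y' (-Y') X').det := by
    rw [show ((Matrix.fromBlocks X Y (-Y) X).det : ℂ) = f (Matrix.fromBlocks X Y (-Y) X).det
      from rfl, RingHom.map_det]
    congr 1
    ext (i | i) (j | j) <;> simp [X', Y', Matrix.fromBlocks, Matrix.map_apply]
  set P : Matrix (Fin m ⊕ Fin m) (Fin m ⊕ Fin m) ℂ :=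
    Matrix.fromBlocks 1 (Complex.I • 1) 0 1 with hP
  set Q : Matrix (Fin m ⊕ Fin m) (Fin m ⊕ Fin m) ℂ :=
    Matrix.fromBlocks 1 (-(Complex.I • 1)) 0 1 with hQ
  have hPQ : P * Matrix.fromBlocks X' Y' (-Y') X' * Q
      = Matrix.fromBlocks (X' - Complex.I • Y') 0 (-Y') (X' + Complex.I • Y') := by
    simp only [hP, hQ, Matrix.fromBlocks_multiply, Matrix.smul_mul, Matrix.mul_smul,
      Matrix.one_mul, Matrix.mul_one, Matrix.zero_mul, Matrix.mul_zero, Matrix.mul_neg,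
      Matrix.neg_mul, add_zero, zero_add, smul_neg, smul_smul, Complex.I_mul_I]
    rw [Matrix.fromBlocks_inj]
    refine ⟨by match_scalars <;> simp [Complex.I_sq], by match_scalars <;> simp [Complex.I_sq],
      by match_scalars <;> simp [Complex.I_sq], by match_scalars <;> simp [Complex.I_sq]⟩
  have hdetP : P.det = 1 := by simp [hP, Matrix.det_fromBlocks_zero₂₁]
  have hdetQ : Q.det = 1 := by simp [hQ, Matrix.det_fromBlocks_zero₂₁]
  have hdet : (Matrix.fromBlocks X' Y' (-Y') X').det
      = (X' - Complex.I • Y').det * (X' + Complex.I • Y').det := by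
    have h := congrArg Matrix.det hPQ
    rwa [Matrix.det_mul, Matrix.det_mul, hdetP, hdetQ, one_mul, mul_one,
      Matrix.det_fromBlocks_zero₁₂] at h
  have hconj : (X' - Complex.I • Y').det
      = (starRingEnd ℂ) (X' + Complex.I • Y').det := by
    rw [RingHom.map_det]
    congr 1
    ext i j
    simp only [RingHom.mapMatrix_apply, Matrix.map_apply, Matrix.add_apply, Matrix.sub_apply,
      Matrix.smul_apply, smul_eq_mul, map_add, _root_.map_mul, X', Y', hf,
      Complex.ofRealHom_eq_coe, Complex.conj_ofReal, Complex.conj_I]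
    ring
  have key : ((Matrix.fromBlocks X Y (-Y) X).det : ℂ)
      = (Complex.normSq ((X' + Complex.I • Y').det) : ℝ) := by
    rw [hmap, hdet, hconj, ← Complex.normSq_eq_conj_mul_self]
  have h2 : (Matrix.fromBlocks X Y (-Y) X).det
      = Complex.normSq ((X' + Complex.I • Y').det) := by
    exact_mod_cast key
  rw [h2]
  exact Complex.normSq_nonneg _

/-- Real symplectic matrices have determinant one. -/
lemma IsSymplectic.det_eq_one {m : ℕ} {M : Mat m} (hM : IsSymplectic M) :
    M.det = 1 := by
  have hJ2 := Jmat_sq m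
  have hdetJ : (Jmat m).det ≠ 0 := by
    intro h
    have h1 := congrArg Matrix.det hJ2
    rw [Matrix.det_mul, h, mul_zero, Matrix.det_neg, Matrix.det_one] at h1
    rw [show Fintype.card (Idx m) = m + m by simp [Fintype.card_sum]] at h1
    rw [Even.neg_one_pow ⟨m, rfl⟩, mul_one] at h1
    exact zero_ne_one h1
  have hsq : M.det ^ 2 = 1 := by
    have h1 := congrArg Matrix.det hM
    rw [Matrix.det_mul, Matrix.det_mul, Matrix.det_transpose] at h1
    have h2 : M.det ^ 2 * (Jmat m).det = 1 * (Jmat m).det := by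
      linear_combination h1
    exact mul_right_cancel₀ hdetJ h2
  have hpos : 0 < (Mᵀ * M + 1).det := by
    have h1 : (Mᵀ * M).PosSemidef := by
      have := Matrix.posSemidef_conjTranspose_mul_self M
      rwa [Matrix.conjTranspose_eq_transpose_of_trivial] at this
    exact (Matrix.PosDef.posSemidef_add h1 Matrix.PosDef.one).det_pos
  have hNinv : Mᵀ * (Jmat m * M * (-(Jmat m))) = 1 := by
    calc Mᵀ * (Jmat m * M * (-(Jmat m))) = (Mᵀ * Jmat m * M) * (-(Jmat m)) := by
          noncomm_ring
      _ = Jmat m * (-(Jmat m)) := by rw [hM]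
      _ = 1 := by rw [Matrix.mul_neg, hJ2]; simp
  have hfact : Mᵀ * (M + Jmat m * M * (-(Jmat m))) = Mᵀ * M + 1 := by
    rw [Matrix.mul_add, hNinv]
  set A := M.toBlocks₁₁
  set B := M.toBlocks₁₂
  set C := M.toBlocks₂₁
  set D := M.toBlocks₂₂
  have hMblocks : M = Matrix.fromBlocks A B C D := (Matrix.fromBlocks_toBlocks M).symm
  have hblock : M + Jmat m * M * (-(Jmat m))
      = Matrix.fromBlocks (A + D) (B - C) (-(B - C)) (A + D) := by
    rw [hMblocks]
    simp only [Jmat, Matrix.fromBlocks_multiply, Matrix.fromBlocks_neg,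
      ← Matrix.fromBlocks_add, Matrix.zero_mul, Matrix.mul_zero, Matrix.neg_mul,
      Matrix.mul_neg, Matrix.one_mul, Matrix.mul_one, add_zero, zero_add, neg_neg,
      neg_zero, Matrix.fromBlocks_add]
    rw [Matrix.fromBlocks_inj]
    refine ⟨by abel, by abel, by abel, by abel⟩
  have hge : 0 ≤ (M + Jmat m * M * (-(Jmat m))).det := by
    rw [hblock]; exact det_special_block_nonneg _ _
  have hprod : M.det * (M + Jmat m * M * (-(Jmat m))).det = (Mᵀ * M + 1).det := by
    rw [← hfact, Matrix.det_mul, Matrix.det_transpose]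
  have hdetpos : 0 < M.det := by
    rcases lt_trichotomy M.det 0 with h | h | h
    · nlinarith
    · nlinarith
    · exact h
  have h3 : (M.det - 1) * (M.det + 1) = 0 := by nlinarith
  rcases mul_eq_zero.mp h3 with h | h
  · linarith
  · linarith

theorem D_omega_is_real
    (n : ℕ) (hn : 1 ≤ n) (M : Mat n) (hM : IsSymplectic M)
    (ω : ℂ) (hω : ‖ω‖ = 1) :
    ((-1 : ℂ) ^ (n - 1) * (starRingEnd ℂ ω) ^ n *
      (M.map (fun r : ℝ => (r : ℂ)) - ω • (1 : Matrix (Idx n) (Idx n) ℂ)).det).im = 0 := by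
  have hfun : (fun r : ℝ => (r : ℂ)) = ⇑Complex.ofRealHom := rfl
  rw [hfun]
  set f : ℝ →+* ℂ := Complex.ofRealHom with hf
  set Mc : Matrix (Idx n) (Idx n) ℂ := M.map f with hMcdef
  set Jc : Matrix (Idx n) (Idx n) ℂ := Matrix.fromBlocks 0 (-1) 1 0 with hJc
  have hωω : ω * (starRingEnd ℂ) ω = 1 := by
    rw [Complex.mul_conj]
    norm_cast
    rw [Complex.normSq_eq_norm_sq, hω, one_pow]
  have hJmap : (Jmat n).map f = Jc := by
    ext (i | i) (j | j) <;>
      simp [Jmat, hJc, Matrix.fromBlocks, Matrix.map_apply, Matrix.one_apply, apply_ite]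
  have hMsymp : Mcᵀ * Jc * Mc = Jc := by
    have h := congrArg (fun X : Mat n => X.map f) hM
    simpa [Matrix.map_mul, Matrix.transpose_map, hJmap] using h
  have hJc2 : Jc * Jc = -1 := by rw [hJc]; exact Jsq_general n ℂ
  have hdetJc : Jc.det ≠ 0 := by
    intro h
    have h1 := congrArg Matrix.det hJc2
    rw [Matrix.det_mul, h, mul_zero, Matrix.det_neg, Matrix.det_one] at h1
    rw [show Fintype.card (Idx n) = n + n by simp [Fintype.card_sum]] at h1
    rw [Even.neg_one_pow ⟨n, rfl⟩, mul_one] at h1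
    exact zero_ne_one h1
  have hdetMc : Mc.det = 1 := by
    rw [hMcdef, ← RingHom.mapMatrix_apply, ← RingHom.map_det, hM.det_eq_one, _root_.map_one]
  set z : ℂ := (Mc - ω • 1).det with hz
  have hconjz : (starRingEnd ℂ) z = (Mc - (starRingEnd ℂ) ω • 1).det := by
    rw [hz, RingHom.map_det]
    congr 1
    ext i j
    simp only [RingHom.mapMatrix_apply, Matrix.map_apply, Matrix.sub_apply, Matrix.smul_apply,
      Matrix.one_apply, smul_eq_mul, map_sub, _root_.map_mul, hMcdef, hf,
      Complex.ofRealHom_eq_coe, Complex.conj_ofReal, apply_ite (starRingEnd ℂ),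
      _root_.map_one, _root_.map_zero]
  have hkey : Mcᵀ * Jc * (Mc - ω • 1)
      = (-ω) • ((Mcᵀ - (starRingEnd ℂ) ω • 1) * Jc) := by
    rw [Matrix.mul_sub, hMsymp, Matrix.sub_mul, smul_sub]
    rw [Matrix.mul_smul, Matrix.smul_mul, Matrix.mul_one, Matrix.one_mul, smul_smul,
      show -ω * (starRingEnd ℂ) ω = -1 by rw [neg_mul, hωω]]
    module
  have hcard : Fintype.card (Idx n) = n + n := by simp [Fintype.card_sum]
  have hzconj : z = ω ^ (n + n) * (starRingEnd ℂ) z := by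
    have h := congrArg Matrix.det hkey
    rw [Matrix.det_mul, Matrix.det_mul, Matrix.det_transpose, hdetMc, one_mul,
      Matrix.det_smul, hcard] at h
    rw [Even.neg_pow ⟨n, rfl⟩ ω] at h
    have htr : (Mcᵀ - (starRingEnd ℂ) ω • 1).det = (Mc - (starRingEnd ℂ) ω • 1).det := by
      rw [show Mcᵀ - (starRingEnd ℂ) ω • 1 = (Mc - (starRingEnd ℂ) ω • 1)ᵀ by
        rw [Matrix.transpose_sub, Matrix.transpose_smul, Matrix.transpose_one],
        Matrix.det_transpose]
    rw [Matrix.det_mul, htr, ← hconjz, ← hz] at h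
    have h2 : Jc.det * z = Jc.det * (ω ^ (n + n) * (starRingEnd ℂ) z) := by
      linear_combination h
    exact mul_left_cancel₀ hdetJc h2
  have hpow : ((starRingEnd ℂ) ω) ^ n * z = ω ^ n * (starRingEnd ℂ) z := by
    conv_lhs => rw [hzconj]
    have h1 : (ω * (starRingEnd ℂ) ω) ^ n = 1 := by rw [hωω, one_pow]
    calc ((starRingEnd ℂ) ω) ^ n * (ω ^ (n + n) * (starRingEnd ℂ) z)
        = (ω * (starRingEnd ℂ) ω) ^ n * (ω ^ n * (starRingEnd ℂ) z) := by ring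
      _ = ω ^ n * (starRingEnd ℂ) z := by rw [h1, one_mul]
  have hconjD : (starRingEnd ℂ) ((-1 : ℂ) ^ (n - 1) * (starRingEnd ℂ ω) ^ n * z)
      = (-1 : ℂ) ^ (n - 1) * (starRingEnd ℂ ω) ^ n * z := by
    rw [_root_.map_mul, _root_.map_mul, map_pow, map_pow, map_neg, _root_.map_one,
      Complex.conj_conj]
    linear_combination (-(-1 : ℂ) ^ (n - 1)) * hpow
  exact Complex.conj_eq_iff_im.mp hconjD
end
end

section
/- Let h ≥ 1 and let G be a closed additive subgroup of ℝ^h. Then the connected component of 0 in G is a linear subspace of ℝ^h, i.e., it is closed under addition and under multiplication by arbitrary real scalars. -/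
open Set
open Filter Topology

lemma aux_line_mem {h : ℕ} (G : AddSubgroup (Fin h → ℝ)) (hG : IsClosed (G : Set (Fin h → ℝ)))
    (y : ℕ → Fin h → ℝ) (hyG : ∀ n, y n ∈ G) (hy0 : ∀ n, y n ≠ 0)
    (v : Fin h → ℝ) (hv : Tendsto (fun n => ‖y n‖⁻¹ • y n) atTop (𝓝 v))
    (hnorm : Tendsto (fun n => ‖y n‖) atTop (𝓝 0)) (t : ℝ) : t • v ∈ G := by
  set a : ℕ → ℝ := fun n => ‖y n‖ with ha
  have hapos : ∀ n, 0 < a n := fun n => norm_pos_iff.2 (hy0 n)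
  set c : ℕ → ℤ := fun n => ⌊t / a n⌋ with hc
  have hzG : ∀ n, (c n) • y n ∈ G := fun n => G.zsmul_mem (hyG n) (c n)
  have hst : Tendsto (fun n => (c n : ℝ) * a n) atTop (𝓝 t) := by
    rw [← tendsto_sub_nhds_zero_iff]
    refine squeeze_zero_norm (a := a) ?_ hnorm
    intro n
    have h1 : |(c n : ℝ) - t / a n| ≤ 1 := by
      rw [abs_sub_comm]
      have := Int.fract_nonneg (t / a n)
      have h2 := (Int.fract_lt_one (t / a n)).le
      rw [Int.fract] at this h2
      rw [abs_le]; constructor <;> nlinarith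
    have : (c n : ℝ) * a n - t = ((c n : ℝ) - t / a n) * a n := by
      rw [sub_mul, div_mul_cancel₀ _ (hapos n).ne']
    rw [this, Real.norm_eq_abs, abs_mul, abs_of_pos (hapos n)]
    calc |(c n : ℝ) - t / a n| * a n ≤ 1 * a n := by
            exact mul_le_mul_of_nonneg_right h1 (hapos n).le
      _ = a n := one_mul _
  have hten : Tendsto (fun n => (c n) • y n) atTop (𝓝 (t • v)) := by
    have heq : ∀ n, (c n) • y n = ((c n : ℝ) * a n) • (‖y n‖⁻¹ • y n) := by
      intro n
      rw [smul_smul, mul_assoc, mul_inv_cancel₀ (hapos n).ne', mul_one,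
        Int.cast_smul_eq_zsmul]
    simp_rw [heq]
    exact hst.smul hv
  exact hG.mem_of_tendsto hten (Filter.Eventually.of_forall hzG)

noncomputable section

theorem connected_component_of_closed_subgroup_is_subspace
    (h : ℕ) (hh : 1 ≤ h) (G : AddSubgroup (Fin h → ℝ))
    (hG : IsClosed (G : Set (Fin h → ℝ))) :
    ∃ W : Submodule ℝ (Fin h → ℝ),
      (W : Set (Fin h → ℝ)) = connectedComponentIn (G : Set (Fin h → ℝ)) 0 := by
  classical
  set E := Fin h → ℝ
  have h0G : (0 : E) ∈ (G : Set E) := G.zero_mem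
  set W : Submodule ℝ E :=
    { carrier := {v : E | ∀ t : ℝ, t • v ∈ G}
      add_mem' := fun {v w} hv hw t => by
        simpa [smul_add] using G.add_mem (hv t) (hw t)
      zero_mem' := fun t => by simpa using G.zero_mem
      smul_mem' := fun s v hv t => by
        simpa [smul_smul] using hv (t * s) } with hW
  have hWmem : ∀ v : E, v ∈ W ↔ ∀ t : ℝ, t • v ∈ G := fun v => Iff.rfl
  have hWG : ∀ v ∈ W, v ∈ (G : Set E) := fun v hv => by simpa using (hWmem v).1 hv 1
  set C := connectedComponentIn (G : Set E) 0 with hC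
  refine ⟨W, ?_⟩
  apply Set.Subset.antisymm
  · -- W ⊆ C : the line through v is connected, inside G, containing 0
    intro v hv
    have hline : IsPreconnected (Set.range (fun t : ℝ => t • v)) :=
      (isConnected_range (continuous_id.smul continuous_const)).isPreconnected
    have hsub : Set.range (fun t : ℝ => t • v) ⊆ (G : Set E) := by
      rintro _ ⟨t, rfl⟩; exact (hWmem v).1 hv t
    have h0mem : (0 : E) ∈ Set.range (fun t : ℝ => t • v) := ⟨0, by simp⟩
    have := hline.subset_connectedComponentIn h0mem hsub
    exact this ⟨1, by simp⟩
  · -- C ⊆ W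
    -- Step A : all sufficiently small elements of G lie in W
    have key : ∃ ε > 0, ∀ x ∈ G, ‖x‖ < ε → x ∈ W := by
      by_contra hcon
      push_neg at hcon
      have hseq : ∀ n : ℕ, ∃ x : E, x ∈ G ∧ ‖x‖ < 1 / (n + 1) ∧ x ∉ W := by
        intro n
        obtain ⟨x, hx1, hx2, hx3⟩ := hcon (1 / (n + 1)) (by positivity)
        exact ⟨x, hx1, hx2, hx3⟩
      choose x hxG hxs hxW using hseq
      obtain ⟨q, hq⟩ := Submodule.exists_isCompl W
      set P := W.projectionOnto q hq with hP
      set f : E →ₗ[ℝ] E := LinearMap.id - W.subtype.comp P with hf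
      set y : ℕ → E := fun n => f (x n) with hy
      have hyq : ∀ n, y n ∈ q := by
        intro n
        have := Submodule.linearProjOfIsCompl_apply_eq_zero_iff hq (x := y n)
        -- alternative: decompose x n
        have hxd : x n ∈ W ⊔ q := by rw [hq.sup_eq_top]; trivial
        rw [Submodule.mem_sup] at hxd
        obtain ⟨w, hw, z, hz, hwz⟩ := hxd
        have hPx : P (x n) = ⟨w, hw⟩ := by
          rw [← hwz]
          simp only [map_add]
          rw [show P w = ⟨w, hw⟩ from Submodule.linearProjOfIsCompl_apply_left hq ⟨w, hw⟩,
            Submodule.projectionOnto_apply_of_mem_right hq hz, add_zero]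
        have hyeq : y n = x n - (P (x n) : E) := by
          simp [hy, hf]
        have : y n = z := by
          rw [hyeq, hPx, ← hwz]
          simp
        rw [this]; exact hz
      have hyG : ∀ n, y n ∈ G := by
        intro n
        have hPW : (P (x n) : E) ∈ W := (P (x n)).2
        have : y n = x n - (P (x n) : E) := by
          simp [hy, hf]
        rw [this]
        exact G.sub_mem (hxG n) (hWG _ hPW)
      have hy0 : ∀ n, y n ≠ 0 := by
        intro n hn
        apply hxW n
        have hyeq : y n = x n - (P (x n) : E) := by simp [hy, hf]
        rw [hyeq] at hn
        have : x n = (P (x n) : E) := sub_eq_zero.mp hn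
        rw [this]; exact (P (x n)).2
      have hxto : Tendsto x atTop (𝓝 0) := by
        refine squeeze_zero_norm (a := fun n : ℕ => 1 / (n + 1 : ℝ)) (fun n => (hxs n).le) ?_
        exact tendsto_one_div_add_atTop_nhds_zero_nat
      have hfc : Continuous f := f.continuous_of_finiteDimensional
      have hyto : Tendsto y atTop (𝓝 0) := by
        have := (hfc.tendsto 0).comp hxto
        simpa [hy, Function.comp_def] using this
      have hnto : Tendsto (fun n => ‖y n‖) atTop (𝓝 0) := by
        simpa using hyto.norm
      -- unit vectors in q ∩ sphere
      set u : ℕ → E := fun n => ‖y n‖⁻¹ • y n with hu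
      have huK : ∀ n, u n ∈ (q : Set E) ∩ Metric.sphere 0 1 := by
        intro n
        refine ⟨q.smul_mem _ (hyq n), ?_⟩
        simp only [mem_sphere_iff_norm, sub_zero, hu, Metric.mem_sphere, dist_zero_right, norm_smul, norm_inv, norm_norm]
        rw [inv_mul_cancel₀ (norm_ne_zero_iff.2 (hy0 n))]
      have hKcomp : IsCompact ((q : Set E) ∩ Metric.sphere 0 1) :=
        (isCompact_sphere (0 : E) 1).inter_left q.closed_of_finiteDimensional
      obtain ⟨v, hvK, φ, hφ, hvto⟩ := hKcomp.tendsto_subseq huK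
      have hφto : Tendsto φ atTop atTop := hφ.tendsto_atTop
      have hvW : v ∈ W := by
        rw [hWmem]
        intro t
        exact aux_line_mem G hG (y ∘ φ) (fun n => hyG (φ n)) (fun n => hy0 (φ n)) v
          (by simpa [hu, Function.comp_def] using hvto) (hnto.comp hφto) t
      have hvq : v ∈ q := hvK.1
      have : v = 0 := by
        have := hq.inf_eq_bot
        have hvb : v ∈ W ⊓ q := ⟨hvW, hvq⟩
        rw [this] at hvb
        simpa using hvb
      have : ‖v‖ = 1 := by simpa using hvK.2
      simp_all
    obtain ⟨ε, hε, hkey⟩ := key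
    -- Step B : connectedness argument
    set U : Set E := ⋃ z ∈ (W : Set E) ∩ C, Metric.ball z ε with hUdef
    have hUopen : IsOpen U := isOpen_biUnion fun z _ => Metric.isOpen_ball
    have hUW : ∀ p ∈ C, p ∈ U → p ∈ W := by
      intro p hpC hpU
      simp only [hUdef, Set.mem_iUnion] at hpU
      obtain ⟨z, ⟨hzW, hzC⟩, hpz⟩ := hpU
      have hdiff : p - z ∈ G := G.sub_mem (connectedComponentIn_subset _ _ hpC)
        (connectedComponentIn_subset _ _ hzC)
      have hsmall : ‖p - z‖ < ε := by
        rw [Metric.mem_ball, dist_eq_norm] at hpz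
        exact hpz
      have := hkey _ hdiff hsmall
      have : p = z + (p - z) := by abel
      rw [this]
      exact W.add_mem hzW (hkey _ hdiff hsmall)
    have hWc : IsClosed (W : Set E) := W.closed_of_finiteDimensional
    have hCpre : IsPreconnected C := isPreconnected_connectedComponentIn
    have h0C : (0 : E) ∈ C := mem_connectedComponentIn h0G
    -- C ⊆ U ∪ Wᶜ
    have hcover : C ⊆ U ∪ (W : Set E)ᶜ := by
      intro p hp
      by_cases hpW : p ∈ (W : Set E)
      · left
        simp only [hUdef, Set.mem_iUnion]
        exact ⟨p, ⟨hpW, hp⟩, Metric.mem_ball_self hε⟩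
      · right; exact hpW
    intro p hpC
    by_contra hpW
    have h1 : (C ∩ U).Nonempty := ⟨0, h0C, by
      simp only [hUdef, Set.mem_iUnion]
      exact ⟨0, ⟨W.zero_mem, h0C⟩, Metric.mem_ball_self hε⟩⟩
    have h2 : (C ∩ (W : Set E)ᶜ).Nonempty := ⟨p, hpC, hpW⟩
    obtain ⟨z, hzC, hzU, hzW⟩ := hCpre U (W : Set E)ᶜ hUopen hWc.isOpen_compl hcover h1 h2
    exact hzW (hUW z hzC hzU)

end
end

section
/- Let h ≥ 1 and v ∈ ℝ^h. For every a ∈ A(v) and every ε ∈ (0, 1/3), there exist infinitely many N ∈ ℕ such that |{N·v} − χ(a)| < ε, where {N·v} ∈ [0,1)^h is the vector of componentwise fractional parts of N·v, χ(a) = (ψ(a₁), …, ψ(a_h)), and |·| is the Euclidean norm on ℝ^h. -/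
open Set

noncomputable section

/-- The integer lattice `ℤ^h` inside `ℝ^h`. -/
def intLattice (h : ℕ) : AddSubgroup (Fin h → ℝ) :=
  AddSubgroup.pi Set.univ fun _ => AddSubgroup.zmultiples (1 : ℝ)

/-- The torus `T^h = ℝ^h / ℤ^h`, with the quotient topology. -/
abbrev Torus (h : ℕ) := (Fin h → ℝ) ⧸ intLattice h

/-- The quotient homomorphism `π : ℝ^h → T^h`. -/
def torusProj (h : ℕ) : (Fin h → ℝ) →+ Torus h := QuotientAddGroup.mk' (intLattice h)
/-- The closure `H` of `{π(m·v) : m ∈ ℕ, m ≥ 1}` in the torus `T^h`. -/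
def Hclosure (h : ℕ) (v : Fin h → ℝ) : Set (Torus h) :=
  closure {p : Torus h | ∃ m : ℕ, 1 ≤ m ∧ p = torusProj h (m • v)}

/-- `V`, the connected component of `0` in the closed subgroup `π⁻¹(H)` of `ℝ^h`. -/
def Vcomp (h : ℕ) (v : Fin h → ℝ) : Set (Fin h → ℝ) :=
  connectedComponentIn (torusProj h ⁻¹' Hclosure h v) 0

/-- `A(v) = V ∖ ⋃_{k : v_k ∉ ℚ} {x ∈ V : x_k = 0}`. -/
def Aset (h : ℕ) (v : Fin h → ℝ) : Set (Fin h → ℝ) :=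
  Vcomp h v \ ⋃ (k : Fin h) (_ : Irrational (v k)), {x : Fin h → ℝ | x k = 0}

/-- `ψ(t) = 0` if `t ≥ 0` and `ψ(t) = 1` if `t < 0`. -/
def psi (t : ℝ) : ℝ := if t < 0 then 1 else 0


set_option maxHeartbeats 1000000

open Module Filter

def Tset (h : ℕ) (v : Fin h → ℝ) : Set (Fin h → ℝ) :=
  {x | ∃ m : ℕ, 1 ≤ m ∧ x - m • v ∈ intLattice h}

lemma mem_intLattice {h : ℕ} {x : Fin h → ℝ} :
    x ∈ intLattice h ↔ ∀ i, ∃ z : ℤ, x i = z := by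
  constructor
  · intro hx i
    have := hx i (mem_univ i)
    rcases this with ⟨z, hz⟩
    exact ⟨z, by simpa using hz.symm⟩
  · intro hx i _
    rcases hx i with ⟨z, hz⟩
    exact ⟨z, by simpa using hz.symm⟩

lemma G_eq (h : ℕ) (v : Fin h → ℝ) :
    torusProj h ⁻¹' Hclosure h v = closure (Tset h v) := by
  have hopen : IsOpenMap (torusProj h) := QuotientAddGroup.isOpenMap_coe
  have hcont : Continuous (torusProj h) := continuous_quot_mk
  rw [Hclosure, hopen.preimage_closure_eq_closure_preimage hcont]
  have : torusProj h ⁻¹' {p : Torus h | ∃ m : ℕ, 1 ≤ m ∧ p = torusProj h (m • v)} = Tset h v := by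
    ext x
    simp only [mem_preimage, mem_setOf_eq, Tset]
    constructor
    · rintro ⟨m, hm, hx⟩
      refine ⟨m, hm, ?_⟩
      have hx' : torusProj h x = torusProj h (m • v) := hx
      rw [torusProj, QuotientAddGroup.mk'_eq_mk'] at hx'
      rcases hx' with ⟨z, hz, hxz⟩
      have : x - m • v = -z := by rw [← hxz]; abel
      rw [this]; exact neg_mem hz
    · rintro ⟨m, hm, hx⟩
      refine ⟨m, hm, ?_⟩
      show torusProj h x = torusProj h (m • v)
      rw [torusProj, QuotientAddGroup.mk'_eq_mk']
      exact ⟨-(x - m • v), neg_mem hx, by abel⟩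
  rw [this]

lemma approx_int (h : ℕ) (w : Fin h → ℝ) {δ : ℝ} (hδ : 0 < δ) (M : ℕ) :
    ∃ j : ℕ, M ≤ j ∧ 1 ≤ j ∧ ∃ z : Fin h → ℝ, z ∈ intLattice h ∧
      ∀ i, |(j : ℝ) * w i + z i| < δ := by
  set K : ℕ := ⌈δ⁻¹⌉₊ + 1 with hK
  have hKpos : (0:ℝ) < K := by positivity
  have hKδ : 1 / (K:ℝ) < δ := by
    rw [div_lt_iff₀ hKpos]
    have h1 : δ⁻¹ < (K:ℝ) := by
      have h2 := Nat.le_ceil δ⁻¹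
      have h3 : ((⌈δ⁻¹⌉₊ : ℝ)) < K := by rw [hK]; push_cast; linarith
      linarith
    calc (1:ℝ) = δ * δ⁻¹ := by field_simp
    _ < δ * K := mul_lt_mul_of_pos_left h1 hδ
  set M' : ℕ := M + 1 with hM'
  -- the box function
  have hbox : ∀ (k : ℕ) (i : Fin h),
      (⌊Int.fract ((k : ℝ) * w i) * K⌋).toNat < K := by
    intro k i
    have h0 : (0:ℝ) ≤ Int.fract ((k : ℝ) * w i) * K :=
      mul_nonneg (Int.fract_nonneg _) hKpos.le
    have h1 : Int.fract ((k : ℝ) * w i) * K < K := by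
      have := Int.fract_lt_one ((k : ℝ) * w i)
      nlinarith
    have : ⌊Int.fract ((k : ℝ) * w i) * K⌋ < (K : ℤ) := by
      exact Int.floor_lt.mpr (by exact_mod_cast h1)
    omega
  classical
  obtain ⟨n, n', hne, heq⟩ := Finite.exists_ne_map_eq_of_infinite
    (fun n : ℕ => fun i : Fin h =>
      (⟨(⌊Int.fract ((↑(M' * (n+1)) : ℝ) * w i) * K⌋).toNat, hbox _ i⟩ : Fin K))
  wlog hlt : n < n' generalizing n n'
  · exact this n' n hne.symm heq.symm (by omega)
  set k₁ : ℕ := M' * (n + 1) with hk₁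
  set k₂ : ℕ := M' * (n' + 1) with hk₂
  have key : k₁ + M' ≤ k₂ := by
    have h1 : (n + 1) + 1 ≤ n' + 1 := by omega
    calc k₁ + M' = M' * (n + 1 + 1) := by ring
      _ ≤ M' * (n' + 1) := Nat.mul_le_mul_left _ h1
  have hkk : k₁ < k₂ := by omega
  refine ⟨k₂ - k₁, ?_, ?_, fun i => ((⌊(k₁:ℝ) * w i⌋ - ⌊(k₂:ℝ) * w i⌋ : ℤ) : ℝ), ?_, ?_⟩
  · omega
  · omega
  · rw [mem_intLattice]; intro i; exact ⟨_, rfl⟩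
  · intro i
    have hfe : ⌊Int.fract ((k₂:ℝ) * w i) * K⌋ = ⌊Int.fract ((k₁:ℝ) * w i) * K⌋ := by
      have := congrFun heq i
      have h2 := congrArg Fin.val this
      simp only at h2
      have hnn : (0:ℤ) ≤ ⌊Int.fract ((k₁:ℝ) * w i) * K⌋ :=
        Int.floor_nonneg.mpr (mul_nonneg (Int.fract_nonneg _) hKpos.le)
      have hnn' : (0:ℤ) ≤ ⌊Int.fract ((k₂:ℝ) * w i) * K⌋ :=
        Int.floor_nonneg.mpr (mul_nonneg (Int.fract_nonneg _) hKpos.le)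
      omega
    have habs : |Int.fract ((k₂:ℝ) * w i) * K - Int.fract ((k₁:ℝ) * w i) * K| < 1 :=
      Int.abs_sub_lt_one_of_floor_eq_floor hfe
    have hval : ((k₂ - k₁ : ℕ) : ℝ) * w i + ((⌊(k₁:ℝ) * w i⌋ - ⌊(k₂:ℝ) * w i⌋ : ℤ) : ℝ)
        = Int.fract ((k₂:ℝ) * w i) - Int.fract ((k₁:ℝ) * w i) := by
      rw [Int.fract, Int.fract]
      push_cast [Nat.cast_sub hkk.le]
      ring
    rw [hval]
    have hlt1 : |Int.fract ((k₂:ℝ) * w i) - Int.fract ((k₁:ℝ) * w i)| * K < 1 := by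
      rw [← abs_of_pos hKpos, ← abs_mul, sub_mul]; exact habs
    have := (lt_div_iff₀ hKpos).mpr hlt1
    linarith

lemma Tset_add {h : ℕ} {v x y : Fin h → ℝ} (hx : x ∈ Tset h v) (hy : y ∈ Tset h v) :
    x + y ∈ Tset h v := by
  obtain ⟨m, hm, hxm⟩ := hx
  obtain ⟨m', hm', hym⟩ := hy
  refine ⟨m + m', by omega, ?_⟩
  have : x + y - (m + m') • v = (x - m • v) + (y - m' • v) := by
    rw [add_smul]; abel
  rw [this]
  exact add_mem hxm hym

lemma mem_closure_Tset {h : ℕ} (v : Fin h → ℝ) {x : Fin h → ℝ} :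
    x ∈ closure (Tset h v) ↔ ∀ δ > 0, ∃ y ∈ Tset h v, dist x y < δ :=
  Metric.mem_closure_iff

lemma closureT_zero {h : ℕ} (v : Fin h → ℝ) : (0 : Fin h → ℝ) ∈ closure (Tset h v) := by
  rw [mem_closure_Tset]
  intro δ hδ
  obtain ⟨j, _, hj1, z, hz, hzj⟩ := approx_int h v hδ 1
  refine ⟨(j : ℕ) • v + z, ⟨j, hj1, by simpa using hz⟩, (dist_pi_lt_iff hδ).mpr fun i => ?_⟩
  have e : ((j:ℕ) • v + z) i = (j:ℝ) * v i + z i := by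
    simp [nsmul_eq_mul]
  rw [show ((0 : Fin h → ℝ) i) = (0:ℝ) from rfl, e, dist_comm, Real.dist_eq, sub_zero]
  exact hzj i

lemma closureT_neg {h : ℕ} (v : Fin h → ℝ) {x : Fin h → ℝ} (hx : x ∈ closure (Tset h v)) :
    -x ∈ closure (Tset h v) := by
  rw [mem_closure_Tset] at hx ⊢
  intro δ hδ
  obtain ⟨y, ⟨m, hm, hym⟩, hxy⟩ := hx (δ/2) (by linarith)
  obtain ⟨j, hj2, hj1, z, hz, hzj⟩ := approx_int h y (show (0:ℝ) < δ/2 by linarith) 2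
  refine ⟨(j - 1) • y + z, ?_, ?_⟩
  · -- membership in Tset
    refine ⟨(j-1) * m, ?_, ?_⟩
    · have : 2 ≤ j := hj2
      have : 1 ≤ j - 1 := by omega
      exact Nat.one_le_iff_ne_zero.mpr (by positivity)
    · have : (j - 1) • y + z - ((j-1) * m) • v = (j-1) • (y - m • v) + z := by
        rw [mul_smul, smul_sub]
        exact add_sub_right_comm _ _ _
      rw [this]
      exact add_mem (nsmul_mem hym _) hz
  · rw [dist_pi_lt_iff hδ]
    intro i
    have h1 : dist (x i) (y i) < δ/2 := by
      have := (dist_pi_lt_iff (show (0:ℝ) < δ/2 by linarith)).mp hxy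
      exact this i
    have h2 : |(j:ℝ) * y i + z i| < δ/2 := hzj i
    have hj1' : ((j:ℕ):ℝ) - 1 = ((j-1 : ℕ) : ℝ) := by
      have : 1 ≤ j := hj1
      push_cast [Nat.cast_sub this]; ring
    have : dist (-x i) ((j-1:ℕ) • y i + z i) ≤ dist (x i) (y i) + |(j:ℝ) * y i + z i| := by
      rw [Real.dist_eq, Real.dist_eq]
      have e2 : ((j-1:ℕ) • y i : ℝ) = ((j:ℝ) - 1) * y i := by
        rw [nsmul_eq_mul, ← hj1']
      have : -x i - ((j-1:ℕ) • y i + z i) = (y i - x i) - ((j:ℝ) * y i + z i) := by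
        rw [e2]; ring
      rw [this]
      calc |(y i - x i) - ((j:ℝ) * y i + z i)| ≤ |y i - x i| + |(j:ℝ) * y i + z i| :=
            abs_sub _ _
        _ = |x i - y i| + |(j:ℝ) * y i + z i| := by rw [abs_sub_comm]
    calc dist ((-x) i) (((j-1) • y + z) i) = dist (-x i) ((j-1:ℕ) • y i + z i) := rfl
      _ ≤ dist (x i) (y i) + |(j:ℝ) * y i + z i| := this
      _ < δ/2 + δ/2 := by exact add_lt_add h1 h2
      _ = δ := by ring

lemma zsmul_mem_closed {E : Type*} [AddCommGroup E] {S : Set E}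
    (h0 : (0:E) ∈ S) (hadd : ∀ x ∈ S, ∀ y ∈ S, x + y ∈ S) (hneg : ∀ x ∈ S, -x ∈ S) :
    ∀ (k : ℤ), ∀ x ∈ S, k • x ∈ S := by
  have hnat : ∀ (k : ℕ), ∀ x ∈ S, k • x ∈ S := by
    intro k
    induction k with
    | zero => intro x _; simpa using h0
    | succ n ihn =>
      intro x hx
      rw [succ_nsmul]
      exact hadd _ (ihn x hx) _ hx
  intro k x hx
  cases k with
  | ofNat n => simpa using hnat n x hx
  | negSucc n =>
    rw [negSucc_zsmul]
    exact hneg _ (hnat _ x hx)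

lemma smul_mem_of_closed_connected (n : ℕ) :
    ∀ (E : Type) [NormedAddCommGroup E] [InnerProductSpace ℝ E] [FiniteDimensional ℝ E],
    finrank ℝ E ≤ n →
    ∀ S : Set E, IsClosed S → IsPreconnected S → (0:E) ∈ S →
    (∀ x ∈ S, ∀ y ∈ S, x + y ∈ S) → (∀ x ∈ S, -x ∈ S) →
    ∀ a ∈ S, ∀ t : ℝ, t • a ∈ S := by
  induction n with
  | zero =>
    intro E _ _ _ hrank S _ _ h0 _ _ a _ t
    rw [Nat.le_zero, finrank_zero_iff] at hrank
    have : t • a = 0 := Subsingleton.elim _ _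
    rw [this]; exact h0
  | succ n ih =>
    intro E _ _ _ hrank S hclosed hconn h0 hadd hneg a ha t
    by_cases htriv : ∀ x ∈ S, x = (0:E)
    · have : a = 0 := htriv a ha
      rw [this, smul_zero]; exact h0
    push_neg at htriv
    obtain ⟨b, hb, hb0⟩ := htriv
    haveI : ProperSpace E := FiniteDimensional.proper ℝ E
    -- small nonzero elements
    have hsmall : ∀ r : ℝ, 0 < r → ∃ x ∈ S, 0 < ‖x‖ ∧ ‖x‖ < r := by
      intro r hr
      have himg : IsPreconnected ((fun x => ‖x‖) '' S) :=
        hconn.image _ continuous_norm.continuousOn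
      have h0' : (0:ℝ) ∈ (fun x => ‖x‖) '' S := ⟨0, h0, norm_zero⟩
      have hb' : ‖b‖ ∈ (fun x => ‖x‖) '' S := ⟨b, hb, rfl⟩
      have hbpos : 0 < ‖b‖ := norm_pos_iff.mpr hb0
      set c : ℝ := min (r/2) ‖b‖ with hc
      have hcpos : 0 < c := lt_min (by linarith) hbpos
      have hcmem : c ∈ Icc (0:ℝ) ‖b‖ := ⟨hcpos.le, min_le_right _ _⟩
      have := himg.Icc_subset h0' hb' hcmem
      obtain ⟨x, hxS, hxn⟩ := this
      have hxn' : ‖x‖ = c := hxn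
      exact ⟨x, hxS, by rw [hxn']; exact hcpos,
        by rw [hxn']; exact lt_of_le_of_lt (min_le_left _ _) (by linarith)⟩
    -- a line inside S
    have hline : ∃ u : E, ‖u‖ = 1 ∧ ∀ s : ℝ, s • u ∈ S := by
      have hex : ∀ m : ℕ, ∃ x, x ∈ S ∧ 0 < ‖x‖ ∧ ‖x‖ < 1/(m+1) := by
        intro m
        obtain ⟨x, hx, h1, h2⟩ := hsmall (1/(m+1)) (by positivity)
        exact ⟨x, hx, h1, h2⟩
      choose x hxS hxpos hxlt using hex
      have humem : ∀ m, (‖x m‖⁻¹ • x m) ∈ Metric.sphere (0:E) 1 := by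
        intro m
        simp [norm_smul, abs_of_pos (inv_pos.mpr (hxpos m)),
          inv_mul_cancel₀ (hxpos m).ne']
      obtain ⟨u, humemu, φ, hφ, hconv⟩ :=
        (isCompact_sphere (0:E) 1).tendsto_subseq humem
      refine ⟨u, by simpa using humemu, fun s => ?_⟩
      set y : ℕ → E := fun m => ⌊s / ‖x (φ m)‖⌋ • x (φ m) with hy
      have hyS : ∀ m, y m ∈ S := fun m =>
        zsmul_mem_closed h0 hadd hneg _ _ (hxS (φ m))
      have hnorm0 : Filter.Tendsto (fun m => ‖x (φ m)‖) Filter.atTop (nhds 0) := by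
        apply squeeze_zero (fun m => (hxpos (φ m)).le) (fun m => (hxlt (φ m)).le)
        have h1 : Filter.Tendsto (fun m : ℕ => 1/((m:ℝ)+1)) Filter.atTop (nhds 0) :=
          tendsto_one_div_add_atTop_nhds_zero_nat
        exact h1.comp (hφ.tendsto_atTop)
      have hcoef : Filter.Tendsto (fun m => (⌊s / ‖x (φ m)‖⌋ : ℝ) * ‖x (φ m)‖)
          Filter.atTop (nhds s) := by
        have hbound : ∀ m, |(⌊s / ‖x (φ m)‖⌋ : ℝ) * ‖x (φ m)‖ - s| ≤ ‖x (φ m)‖ := by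
          intro m
          have hpos := hxpos (φ m)
          have hfl : (⌊s / ‖x (φ m)‖⌋ : ℝ) ≤ s / ‖x (φ m)‖ := Int.floor_le _
          have hfl2 : s / ‖x (φ m)‖ - 1 < (⌊s / ‖x (φ m)‖⌋ : ℝ) := by
            have := Int.lt_floor_add_one (s / ‖x (φ m)‖); linarith
          rw [abs_le]
          have hub := mul_le_mul_of_nonneg_right hfl (norm_nonneg (x (φ m)))
          rw [div_mul_cancel₀ _ hpos.ne'] at hub
          have hlb := mul_lt_mul_of_pos_right hfl2 hpos
          rw [sub_mul, div_mul_cancel₀ _ hpos.ne', one_mul] at hlb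
          constructor
          · linarith
          · linarith [norm_nonneg (x (φ m))]
        have : Filter.Tendsto (fun m => ‖x (φ m)‖) Filter.atTop (nhds 0) := hnorm0
        have hdiff : Filter.Tendsto
            (fun m => (⌊s / ‖x (φ m)‖⌋ : ℝ) * ‖x (φ m)‖ - s) Filter.atTop (nhds 0) := by
          apply squeeze_zero_norm hbound hnorm0
        have := hdiff.add_const s
        simpa using this
      have hyconv : Filter.Tendsto y Filter.atTop (nhds (s • u)) := by
        have : ∀ m, y m = ((⌊s / ‖x (φ m)‖⌋ : ℝ) * ‖x (φ m)‖) • (‖x (φ m)‖⁻¹ • x (φ m)) := by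
          intro m
          rw [smul_smul, mul_assoc, mul_inv_cancel₀ (hxpos (φ m)).ne', mul_one, hy]
          simp [Int.cast_smul_eq_zsmul]
        rw [funext this]
        exact hcoef.smul hconv
      exact hclosed.mem_of_tendsto hyconv (Filter.Eventually.of_forall hyS)
    obtain ⟨u, hu1, huS⟩ := hline
    have hu0 : u ≠ 0 := by intro hz; rw [hz, norm_zero] at hu1; norm_num at hu1
    set K : Submodule ℝ E := ℝ ∙ u with hK
    set W : Submodule ℝ E := Kᗮ with hW
    have hrankW : finrank ℝ W ≤ n := by
      have h1 : finrank ℝ K = 1 := finrank_span_singleton hu0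
      have h2 := K.finrank_add_finrank_orthogonal
      have h3 : finrank ℝ K + finrank ℝ W = finrank ℝ E := h2
      omega
    set P := W.orthogonalProjectionOnto with hP
    -- decomposition
    have hdecomp : ∀ x : E, ∃ s : ℝ, x = s • u + ↑(P x) := by
      intro x
      have hsum : (↑(K.orthogonalProjectionOnto x) : E) + ↑(P x) = x :=
        K.starProjection_add_starProjection_orthogonal x
      obtain ⟨s, hs⟩ := Submodule.mem_span_singleton.mp
        (K.orthogonalProjectionOnto x).2
      refine ⟨s, ?_⟩
      conv_lhs => rw [← hsum]
      rw [hs]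
    have hPS : ∀ x ∈ S, (↑(P x) : E) ∈ S := by
      intro x hx
      obtain ⟨s, hs⟩ := hdecomp x
      have h3 : (↑(P x) : E) = x - s • u := by
        rw [eq_sub_iff_add_eq, add_comm]; exact hs.symm
      rw [h3, sub_eq_add_neg]
      exact hadd _ hx _ (hneg _ (huS s))
    set S' : Set W := ((↑) : W → E) ⁻¹' S with hS'
    have hS'closed : IsClosed S' := hclosed.preimage continuous_subtype_val
    have hS'img : S' = P '' S := by
      ext w
      constructor
      · intro hw
        exact ⟨↑w, hw, Submodule.orthogonalProjectionOnto_mem_subspace_eq_self w⟩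
      · rintro ⟨x, hxS, rfl⟩
        exact hPS x hxS
    have hS'conn : IsPreconnected S' := by
      rw [hS'img]
      exact hconn.image _ (P.continuous.continuousOn)
    have hS'0 : (0 : W) ∈ S' := by simpa [hS'] using h0
    have hS'add : ∀ x ∈ S', ∀ y ∈ S', x + y ∈ S' := by
      intro x hx y hy
      simp only [hS', mem_preimage, Submodule.coe_add] at *
      exact hadd _ hx _ hy
    have hS'neg : ∀ x ∈ S', -x ∈ S' := by
      intro x hx
      simp only [hS', mem_preimage, Submodule.coe_neg] at *
      exact hneg _ hx
    have hPa : P a ∈ S' := by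
      rw [hS', mem_preimage]; exact hPS a ha
    have := ih W hrankW S' hS'closed hS'conn hS'0 hS'add hS'neg (P a) hPa t
    obtain ⟨s₀, hs₀⟩ := hdecomp a
    have hta : t • a = (t * s₀) • u + (↑(t • P a) : E) := by
      conv_lhs => rw [hs₀]
      rw [smul_add, smul_smul, Submodule.coe_smul]
    rw [hta]
    exact hadd _ (huS (t * s₀)) _ this

section VVsec
variable {h : ℕ} (v : Fin h → ℝ)

def VV : Set (Fin h → ℝ) := connectedComponentIn (closure (Tset h v)) 0

lemma VV_subset : VV v ⊆ closure (Tset h v) := connectedComponentIn_subset _ _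

lemma VV_zero : (0 : Fin h → ℝ) ∈ VV v := mem_connectedComponentIn (closureT_zero v)

lemma VV_preconnected : IsPreconnected (VV v) := isPreconnected_connectedComponentIn

lemma VV_closed : IsClosed (VV v) := by
  rw [VV, connectedComponentIn_eq_image (closureT_zero v)]
  exact (isClosed_closure.isClosedEmbedding_subtypeVal).isClosedMap _
    isClosed_connectedComponent

lemma closureT_add {x y : Fin h → ℝ} (hx : x ∈ closure (Tset h v))
    (hy : y ∈ closure (Tset h v)) : x + y ∈ closure (Tset h v) := by
  have := map_mem_closure₂ continuous_add hx hy (fun a ha b hb => Tset_add ha hb)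
  exact this

lemma VV_add {x y : Fin h → ℝ} (hx : x ∈ VV v) (hy : y ∈ VV v) : x + y ∈ VV v := by
  have himg : IsPreconnected ((fun p : (Fin h → ℝ) × (Fin h → ℝ) => p.1 + p.2) ''
      (VV v ×ˢ VV v)) :=
    ((VV_preconnected v).prod (VV_preconnected v)).image _ continuous_add.continuousOn
  have hsub : (fun p : (Fin h → ℝ) × (Fin h → ℝ) => p.1 + p.2) '' (VV v ×ˢ VV v) ⊆
      closure (Tset h v) := by
    rintro - ⟨⟨p, q⟩, ⟨hp, hq⟩, rfl⟩
    exact closureT_add v (VV_subset v hp) (VV_subset v hq)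
  have h0 : (0 : Fin h → ℝ) ∈ (fun p : (Fin h → ℝ) × (Fin h → ℝ) => p.1 + p.2) ''
      (VV v ×ˢ VV v) := ⟨(0,0), ⟨VV_zero v, VV_zero v⟩, by simp⟩
  exact himg.subset_connectedComponentIn h0 hsub ⟨(x,y), ⟨hx, hy⟩, rfl⟩

lemma VV_neg {x : Fin h → ℝ} (hx : x ∈ VV v) : -x ∈ VV v := by
  have himg : IsPreconnected ((fun y : Fin h → ℝ => -y) '' VV v) :=
    (VV_preconnected v).image _ continuous_neg.continuousOn
  have hsub : (fun y : Fin h → ℝ => -y) '' VV v ⊆ closure (Tset h v) := by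
    rintro - ⟨p, hp, rfl⟩
    exact closureT_neg v (VV_subset v hp)
  have h0 : (0 : Fin h → ℝ) ∈ (fun y : Fin h → ℝ => -y) '' VV v :=
    ⟨0, VV_zero v, by simp⟩
  exact himg.subset_connectedComponentIn h0 hsub ⟨x, hx, rfl⟩

lemma VV_smul {a : Fin h → ℝ} (ha : a ∈ VV v) (t : ℝ) : t • a ∈ VV v := by
  set e : EuclideanSpace ℝ (Fin h) ≃L[ℝ] (Fin h → ℝ) := EuclideanSpace.equiv (Fin h) ℝ
  set S₂ : Set (EuclideanSpace ℝ (Fin h)) := ⇑e ⁻¹' VV v with hS₂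
  have hclosed : IsClosed S₂ := (VV_closed v).preimage e.continuous
  have himg : S₂ = ⇑e.symm '' VV v := by
    ext y
    constructor
    · intro hy; exact ⟨e y, hy, by simp⟩
    · rintro ⟨x, hx, rfl⟩; simpa [hS₂] using hx
  have hconn : IsPreconnected S₂ := by
    rw [himg]
    exact (VV_preconnected v).image _ e.symm.continuous.continuousOn
  have h0 : (0 : EuclideanSpace ℝ (Fin h)) ∈ S₂ := by
    simp only [hS₂, mem_preimage, map_zero]
    exact VV_zero v
  have hadd : ∀ x ∈ S₂, ∀ y ∈ S₂, x + y ∈ S₂ := by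
    intro x hx y hy
    simp only [hS₂, mem_preimage, map_add] at *
    exact VV_add v hx hy
  have hneg : ∀ x ∈ S₂, -x ∈ S₂ := by
    intro x hx
    simp only [hS₂, mem_preimage, map_neg] at *
    exact VV_neg v hx
  have ha₂ : e.symm a ∈ S₂ := by
    simp only [hS₂, mem_preimage, ContinuousLinearEquiv.apply_symm_apply]
    exact ha
  have hrank : finrank ℝ (EuclideanSpace ℝ (Fin h)) ≤ h := by
    rw [finrank_euclideanSpace_fin]
  have := smul_mem_of_closed_connected h (EuclideanSpace ℝ (Fin h)) hrank S₂
    hclosed hconn h0 hadd hneg (e.symm a) ha₂ t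
  have he : e (t • e.symm a) = t • a := by
    rw [map_smul, ContinuousLinearEquiv.apply_symm_apply]
  rw [← he]
  exact this

lemma VV_rat_coord_zero {x : Fin h → ℝ} (hx : x ∈ VV v) {i : Fin h}
    (hv : ¬ Irrational (v i)) : x i = 0 := by
  rw [Irrational, not_not] at hv
  obtain ⟨r, hr⟩ := hv
  set q : ℕ := r.den with hq
  have hq0 : (0:ℝ) < q := by exact_mod_cast r.pos
  -- the closed set D
  set f : (Fin h → ℝ) → ℝ := fun y => (q:ℝ) * y i with hf
  have hfc : Continuous f := by fun_prop
  set D : Set (Fin h → ℝ) := f ⁻¹' (range ((↑) : ℤ → ℝ)) with hD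
  have hDclosed : IsClosed D :=
    Int.isClosedEmbedding_coe_real.isClosed_range.preimage hfc
  have hqv : (q:ℝ) * v i = (r.num : ℝ) := by
    rw [← hr]
    have : ((q:ℚ):ℝ) * ((r:ℚ):ℝ) = ((r.num:ℚ):ℝ) := by
      rw [← Rat.cast_mul]
      congr 1
      rw [hq]
      exact_mod_cast Rat.den_mul_eq_num r
    simpa using this
  have hTD : Tset h v ⊆ D := by
    rintro y ⟨m, hm, hym⟩
    obtain ⟨z, hz⟩ := (mem_intLattice.mp hym) i
    have hyi : y i = m * v i + z := by
      have : y i - (m:ℝ) * v i = z := by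
        simpa [Pi.sub_apply, Pi.smul_apply, nsmul_eq_mul] using hz
      linarith
    refine ⟨(m * r.num + q * z : ℤ), ?_⟩
    show ((m * r.num + q * z : ℤ) : ℝ) = (q:ℝ) * y i
    push_cast
    rw [hyi, mul_add]
    have : (q:ℝ) * ((m:ℝ) * v i) = (m:ℝ) * ((q:ℝ) * v i) := by ring
    rw [this, hqv]
  have hVD : VV v ⊆ D := (VV_subset v).trans (closure_minimal hTD hDclosed)
  -- image argument
  by_contra hxi
  have himg : IsPreconnected (f '' VV v) :=
    (VV_preconnected v).image _ hfc.continuousOn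
  have h0' : (0:ℝ) ∈ f '' VV v := ⟨0, VV_zero v, by simp [hf]⟩
  have hc' : f x ∈ f '' VV v := ⟨x, hx, rfl⟩
  have hsub : f '' VV v ⊆ range ((↑) : ℤ → ℝ) := by
    rintro - ⟨y, hy, rfl⟩
    exact hVD hy
  have hfx0 : f x ≠ 0 := by
    rw [hf]
    exact mul_ne_zero hq0.ne' hxi
  rcases hfx0.lt_or_gt with hlt | hlt
  · obtain ⟨ξ, hξirr, hξ1, hξ2⟩ := exists_irrational_btwn hlt
    have : ξ ∈ f '' VV v := himg.Icc_subset hc' h0' ⟨hξ1.le, hξ2.le⟩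
    obtain ⟨n, hn⟩ := hsub this
    exact hξirr.ne_int n hn.symm
  · obtain ⟨ξ, hξirr, hξ1, hξ2⟩ := exists_irrational_btwn hlt
    have : ξ ∈ f '' VV v := himg.Icc_subset h0' hc' ⟨hξ1.le, hξ2.le⟩
    obtain ⟨n, hn⟩ := hsub this
    exact hξirr.ne_int n hn.symm

end VVsec

-- F1
lemma closureT_approx {h : ℕ} (v : Fin h → ℝ) {x : Fin h → ℝ}
    (hx : x ∈ closure (Tset h v)) {δ : ℝ} (hδ : 0 < δ) (M : ℕ) :
    ∃ N : ℕ, M ≤ N ∧ ∃ z : Fin h → ℝ, z ∈ intLattice h ∧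
      ∀ i, |x i - ((N:ℝ) * v i + z i)| < δ := by
  obtain ⟨y, ⟨m, hm, hym⟩, hxy⟩ := Metric.mem_closure_iff.mp hx (δ/2) (by linarith)
  obtain ⟨j, hjM, hj1, z', hz', hzj⟩ := approx_int h v (show (0:ℝ) < δ/2 by linarith) M
  refine ⟨m + j, by omega, (y - m • v) + z', add_mem hym hz', fun i => ?_⟩
  have h1 : |x i - y i| < δ/2 := by
    have := (dist_pi_lt_iff (show (0:ℝ) < δ/2 by linarith)).mp hxy i
    simpa [Real.dist_eq] using this
  have h2 : |(j:ℝ) * v i + z' i| < δ/2 := hzj i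
  have hkey : x i - (((m + j : ℕ):ℝ) * v i + ((y - m • v) + z') i)
      = (x i - y i) - ((j:ℝ) * v i + z' i) := by
    simp only [Pi.add_apply, Pi.sub_apply, Pi.smul_apply, nsmul_eq_mul]
    push_cast [Pi.mul_apply, Pi.natCast_apply]
    ring
  rw [hkey]
  calc |(x i - y i) - ((j:ℝ) * v i + z' i)| ≤ |x i - y i| + |(j:ℝ) * v i + z' i| :=
        abs_sub _ _
    _ < δ/2 + δ/2 := add_lt_add h1 h2
    _ = δ := by ring

theorem infinitely_many_N_with_fract_close_to_chi
    (h : ℕ) (hh : 1 ≤ h) (v : Fin h → ℝ) (a : Fin h → ℝ) (ha : a ∈ Aset h v)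
    (ε : ℝ) (hε : 0 < ε) (hε' : ε < 1 / 3) :
    {N : ℕ | Real.sqrt (∑ i, (Int.fract ((N : ℝ) * v i) - psi (a i)) ^ 2) < ε}.Infinite := by
  classical
  obtain ⟨haV', haI⟩ := ha
  have haV : a ∈ VV v := by rwa [Vcomp, G_eq] at haV'
  -- irrational coordinates are nonzero
  have hirr : ∀ i, Irrational (v i) → a i ≠ 0 := by
    intro i hi
    intro hai
    exact haI (mem_iUnion.mpr ⟨i, mem_iUnion.mpr ⟨hi, hai⟩⟩)
  have hzero : ∀ i, a i = 0 → ¬ Irrational (v i) := fun i hai hi => hirr i hi hai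
  have hrat : ∀ i, ¬ Irrational (v i) → a i = 0 := fun i hi => VV_rat_coord_zero v haV hi
  -- denominators
  have hden : ∀ i : Fin h, ∃ d : ℕ, 0 < d ∧ (a i = 0 → ∃ p : ℤ, (d:ℝ) * v i = p) := by
    intro i
    by_cases hai : a i = 0
    · have := hzero i hai
      rw [Irrational, not_not] at this
      obtain ⟨r, hr⟩ := this
      refine ⟨r.den, r.pos, fun _ => ⟨r.num, ?_⟩⟩
      rw [← hr]
      rw [show ((r.den:ℝ)) * ((r:ℚ):ℝ) = (((r.den * r : ℚ)) : ℝ) by push_cast; ring]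
      exact_mod_cast Rat.den_mul_eq_num r
    · exact ⟨1, one_pos, fun hc => absurd hc hai⟩
  choose d hd0 hdp using hden
  -- parameters
  set ε' : ℝ := ε / (h + 1) with hε'def
  have hε'pos : 0 < ε' := by positivity
  set t : ℝ := ε' / (2 * (‖a‖ + 1)) with ht
  have hnorm : ∀ i, |a i| ≤ ‖a‖ := fun i => norm_le_pi_norm a i
  have hna : (0:ℝ) ≤ ‖a‖ := norm_nonneg a
  have htpos : 0 < t := by positivity
  have hta : ∀ i, t * |a i| < ε' / 2 := by
    intro i
    rw [ht]
    rw [div_mul_eq_mul_div, div_lt_div_iff₀ (by positivity) (by norm_num)]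
    have := hnorm i
    nlinarith
  -- delta
  have hne : (Finset.univ : Finset (Fin h)).Nonempty := ⟨⟨0, hh⟩, Finset.mem_univ _⟩
  set g : Fin h → ℝ := fun i => if a i = 0 then 1/(2 * (d i : ℝ)) else t * |a i| / 2 with hg
  set δ : ℝ := Finset.univ.inf' hne g with hδdef
  have hgpos : ∀ i, 0 < g i := by
    intro i
    simp only [hg]
    by_cases hai : a i = 0
    · rw [if_pos hai]
      have h1 := hd0 i
      have h2 : (0:ℝ) < d i := by exact_mod_cast h1
      positivity
    · rw [if_neg hai]
      have : 0 < |a i| := abs_pos.mpr hai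
      positivity
  have hδpos : 0 < δ := by
    rw [hδdef]
    exact (Finset.lt_inf'_iff hne).mpr fun i _ => hgpos i
  have hδle : ∀ i, δ ≤ g i := fun i => Finset.inf'_le _ (Finset.mem_univ i)
  -- the target point
  set x : Fin h → ℝ := t • a with hx
  have hxV : x ∈ VV v := VV_smul v haV t
  have hxcl : x ∈ closure (Tset h v) := VV_subset v hxV
  -- infinitude
  apply Set.infinite_of_forall_exists_gt
  intro M
  obtain ⟨N, hNM, z, hz, hNz⟩ := closureT_approx v hxcl hδpos (M + 1)
  refine ⟨N, ?_, by omega⟩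
  -- per coordinate bound
  have hcoord : ∀ i, |Int.fract ((N:ℝ) * v i) - psi (a i)| ≤ ε' := by
    intro i
    obtain ⟨w, hw⟩ := mem_intLattice.mp hz i
    have hNi : |x i - ((N:ℝ) * v i + z i)| < δ := hNz i
    rcases lt_trichotomy (a i) 0 with hai | hai | hai
    · -- negative: psi = 1
      have hpsi : psi (a i) = 1 := if_pos hai
      have hxi : x i = t * a i := by rw [hx]; simp [smul_eq_mul]
      have hgi : g i = t * |a i| / 2 := by simp only [hg]; rw [if_neg hai.ne]
      have habs : |a i| = -a i := abs_of_neg hai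
      set F : ℝ := (N:ℝ) * v i + z i with hF
      have hF1 : x i - δ < F := by have := abs_lt.mp hNi; linarith
      have hF2 : F < x i + δ := by have := abs_lt.mp hNi; linarith
      have hδi : δ ≤ t * (-a i) / 2 := by have := hδle i; rw [hgi, habs] at this; linarith
      have htai : t * (-a i) < ε' / 2 := by have := hta i; rw [habs] at this; linarith
      have hFneg : F < 0 := by rw [hxi] at hF2; nlinarith
      have hFgt : -1 < F := by
        rw [hxi] at hF1
        have h1 : -ε' < F := by nlinarith
        have : ε' < 1 := by
          rw [hε'def, div_lt_one (by positivity)]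
          have : (0:ℝ) ≤ (h:ℝ) := Nat.cast_nonneg h
          linarith
        linarith
      have hfr : Int.fract ((N:ℝ) * v i) = F + 1 := by
        have : (N:ℝ) * v i = F - w := by rw [hF, hw]; ring
        rw [this, Int.fract_sub_intCast, show F = (F + 1) - (1:ℤ) by push_cast; ring,
          Int.fract_sub_intCast, Int.fract_eq_self.mpr ⟨by linarith, by linarith⟩]
        push_cast
        ring
      rw [hfr, hpsi]
      have : |F + 1 - 1| = |F| := by ring_nf
      rw [this, abs_of_neg hFneg]
      rw [hxi] at hF1
      nlinarith
    · -- zero : psi = 0, exact integrality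
      have hpsi : psi (a i) = 0 := by rw [psi, if_neg (by rw [hai]; exact lt_irrefl 0)]
      have hxi : x i = 0 := by rw [hx]; simp [smul_eq_mul, hai]
      obtain ⟨p, hp⟩ := hdp i hai
      have hgi : g i = 1/(2 * (d i : ℝ)) := by simp only [hg]; rw [if_pos hai]
      have hdpos : (0:ℝ) < d i := by exact_mod_cast hd0 i
      have hsmall : |(N:ℝ) * v i + z i| < 1/(2 * (d i:ℝ)) := by
        have := hNz i
        rw [hxi] at this
        have h2 := hδle i
        rw [hgi] at h2
        calc |(N:ℝ) * v i + z i| = |0 - ((N:ℝ)*v i + z i)| := by rw [zero_sub, abs_neg]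
          _ < δ := this
          _ ≤ _ := h2
      -- integer c := N * p + d i * w
      have hint : ((N * p + (d i : ℤ) * w : ℤ) : ℝ) = (d i : ℝ) * ((N:ℝ) * v i + z i) := by
        push_cast
        rw [hw, mul_add]
        have : (d i:ℝ) * ((N:ℝ) * v i) = (N:ℝ) * ((d i:ℝ) * v i) := by ring
        rw [this, hp]
      have habs : |((N * p + (d i : ℤ) * w : ℤ) : ℝ)| < 1/2 := by
        rw [hint, abs_mul, abs_of_pos hdpos]
        calc (d i:ℝ) * |(N:ℝ) * v i + z i| < (d i:ℝ) * (1/(2 * (d i:ℝ))) :=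
              mul_lt_mul_of_pos_left hsmall hdpos
          _ = 1/2 := by field_simp
      have hzero' : (N * p + (d i : ℤ) * w : ℤ) = 0 := by
        by_contra hc
        have h1 : (1:ℝ) ≤ |((N * p + (d i : ℤ) * w : ℤ) : ℝ)| := by
          rw [← Int.cast_abs]
          exact_mod_cast Int.one_le_abs (by omega)
        linarith
      have hNvint : (N:ℝ) * v i = -w := by
        have h2 : (d i:ℝ) * ((N:ℝ) * v i + z i) = 0 := by rw [← hint, hzero']; simp
        have h3 : (N:ℝ) * v i + z i = 0 := by
          rcases mul_eq_zero.mp h2 with hc | hc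
          · exact absurd hc hdpos.ne'
          · exact hc
        rw [hw] at h3
        linarith
      rw [hNvint, hpsi]
      rw [show ((-w : ℝ)) = ((-w : ℤ) : ℝ) by push_cast; ring, Int.fract_intCast]
      simpa using hε'pos.le
    · -- positive: psi = 0
      have hpsi : psi (a i) = 0 := by rw [psi, if_neg (by linarith)]
      have hxi : x i = t * a i := by rw [hx]; simp [smul_eq_mul]
      have hgi : g i = t * |a i| / 2 := by simp only [hg]; rw [if_neg hai.ne']
      have habs : |a i| = a i := abs_of_pos hai
      set F : ℝ := (N:ℝ) * v i + z i with hF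
      have hF1 : x i - δ < F := by have := abs_lt.mp hNi; linarith
      have hF2 : F < x i + δ := by have := abs_lt.mp hNi; linarith
      have hδi : δ ≤ t * a i / 2 := by have := hδle i; rw [hgi, habs] at this; linarith
      have htai : t * a i < ε' / 2 := by have := hta i; rw [habs] at this; linarith
      have hFpos : 0 < F := by rw [hxi] at hF1; nlinarith
      have hε1 : ε' < 1 := by
        rw [hε'def, div_lt_one (by positivity)]
        have : (0:ℝ) ≤ (h:ℝ) := Nat.cast_nonneg h
        linarith
      have hFlt : F < ε' := by rw [hxi] at hF2; nlinarith
      have hfr : Int.fract ((N:ℝ) * v i) = F := by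
        have : (N:ℝ) * v i = F - w := by rw [hF, hw]; ring
        rw [this, Int.fract_sub_intCast, Int.fract_eq_self.mpr ⟨hFpos.le, by linarith⟩]
      rw [hfr, hpsi, sub_zero, abs_of_pos hFpos]
      linarith
  -- sum bound
  show Real.sqrt (∑ i, (Int.fract ((N : ℝ) * v i) - psi (a i)) ^ 2) < ε
  have hsum : ∑ i, (Int.fract ((N : ℝ) * v i) - psi (a i)) ^ 2 ≤ (h:ℝ) * ε'^2 := by
    calc ∑ i, (Int.fract ((N : ℝ) * v i) - psi (a i)) ^ 2 ≤ ∑ _i : Fin h, ε'^2 := by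
          apply Finset.sum_le_sum
          intro i _
          have := hcoord i
          have h2 : |Int.fract ((N : ℝ) * v i) - psi (a i)|^2 ≤ ε'^2 := by
            apply sq_le_sq' <;> [linarith [abs_nonneg (Int.fract ((N : ℝ) * v i) - psi (a i))]; exact this]
          rwa [sq_abs] at h2
      _ = (h:ℝ) * ε'^2 := by rw [Finset.sum_const]; simp [mul_comm]
  calc Real.sqrt (∑ i, (Int.fract ((N : ℝ) * v i) - psi (a i)) ^ 2)
      ≤ Real.sqrt ((h:ℝ) * ε'^2) := Real.sqrt_le_sqrt hsum
    _ = Real.sqrt (h:ℝ) * ε' := by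
        rw [Real.sqrt_mul (by positivity), Real.sqrt_sq hε'pos.le]
    _ ≤ (h:ℝ) * ε' := by
        apply mul_le_mul_of_nonneg_right _ hε'pos.le
        have h1 : (1:ℝ) ≤ (h:ℝ) := by exact_mod_cast hh
        calc Real.sqrt (h:ℝ) ≤ Real.sqrt ((h:ℝ)^2) := Real.sqrt_le_sqrt (by nlinarith)
          _ = (h:ℝ) := Real.sqrt_sq (by positivity)
    _ < ε := by
        rw [hε'def, mul_div_assoc']
        rw [div_lt_iff₀ (by positivity : (0:ℝ) < (h:ℝ)+1)]
        nlinarith [hε]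

end
end

section
/- Let q ≥ 1, let î₁, …, î_q be positive real numbers, and for each k ∈ {1,…,q} let θ_{k,1}, …, θ_{k,μ_k} be finitely many real numbers in (0, 2π). Then for every δ ∈ (0, 1/2) and every ε > 0, there exist infinitely many N ∈ ℕ such that for each k ∈ {1,…,q} there is an integer m_k ≥ 1 satisfying: (i) |m_k · î_k − N| < ε; (ii) for every j ∈ {1,…,μ_k}, min({m_k θ_{k,j}/π}, 1 − {m_k θ_{k,j}/π}) < δ; and (iii) m_k θ_{k,j}/π ∈ ℤ whenever θ_{k,j}/π ∈ ℚ. -/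
open Real Set

lemma min_fract_le (x : ℝ) (p : ℤ) :
    min (Int.fract x) (1 - Int.fract x) ≤ |x - p| := by
  have hf : Int.fract x = x - ⌊x⌋ := rfl
  have hfl := Int.floor_le x
  have hfu := Int.lt_floor_add_one x
  rcases le_or_gt p ⌊x⌋ with h | h
  · have hp : (p : ℝ) ≤ ⌊x⌋ := by exact_mod_cast h
    refine le_trans (min_le_left _ _) ?_
    rw [abs_of_nonneg (by linarith)]; linarith
  · have hp : (⌊x⌋ : ℝ) + 1 ≤ p := by exact_mod_cast h
    refine le_trans (min_le_right _ _) ?_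
    rw [abs_sub_comm, abs_of_nonneg (by linarith)]; linarith

lemma exists_simul {I : Type*} [Fintype I] (v : I → ℝ) {η : ℝ} (hη : 0 < η) :
    ∃ N : ℕ, 1 ≤ N ∧ ∀ i, ∃ p : ℤ, |(N : ℝ) * v i - p| < η := by
  obtain ⟨M, hM⟩ := exists_nat_gt (1 / η)
  have hM0 : (0:ℝ) < M := lt_trans (by positivity) hM
  have hM1 : 0 < M := by exact_mod_cast hM0
  let g : ℕ → I → Fin M := fun N i =>
    ⟨(⌊(M : ℝ) * Int.fract ((N : ℝ) * v i)⌋).toNat, by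
      have h1 : (M : ℝ) * Int.fract ((N : ℝ) * v i) < M := by
        have := Int.fract_lt_one ((N : ℝ) * v i)
        have := Int.fract_nonneg ((N : ℝ) * v i)
        nlinarith
      have h2 : ⌊(M : ℝ) * Int.fract ((N : ℝ) * v i)⌋ < (M : ℤ) :=
        Int.floor_lt.mpr (by exact_mod_cast h1)
      omega⟩
  obtain ⟨N₁, N₂, hne, heq⟩ := Finite.exists_ne_map_eq_of_infinite g
  wlog hlt : N₁ < N₂ generalizing N₁ N₂
  · exact this N₂ N₁ hne.symm heq.symm (by omega)
  refine ⟨N₂ - N₁, by omega, fun i => ?_⟩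
  have hgv : ((g N₁ i : ℕ) : ℤ) = ((g N₂ i : ℕ) : ℤ) := by rw [congrFun heq i]
  have hfi : (⌊(M : ℝ) * Int.fract ((N₁ : ℝ) * v i)⌋) = ⌊(M : ℝ) * Int.fract ((N₂ : ℝ) * v i)⌋ := by
    simp only [g] at hgv
    have h1 : 0 ≤ ⌊(M : ℝ) * Int.fract ((N₁ : ℝ) * v i)⌋ :=
      Int.floor_nonneg.mpr (mul_nonneg hM0.le (Int.fract_nonneg _))
    have h2 : 0 ≤ ⌊(M : ℝ) * Int.fract ((N₂ : ℝ) * v i)⌋ :=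
      Int.floor_nonneg.mpr (mul_nonneg hM0.le (Int.fract_nonneg _))
    omega
  have habs : |(M:ℝ) * Int.fract ((N₁ : ℝ) * v i) - (M:ℝ) * Int.fract ((N₂ : ℝ) * v i)| < 1 :=
    Int.abs_sub_lt_one_of_floor_eq_floor hfi
  refine ⟨⌊(N₂ : ℝ) * v i⌋ - ⌊(N₁ : ℝ) * v i⌋, ?_⟩
  have e1 : Int.fract ((N₁ : ℝ) * v i) = (N₁ : ℝ) * v i - ⌊(N₁ : ℝ) * v i⌋ := rfl
  have e2 : Int.fract ((N₂ : ℝ) * v i) = (N₂ : ℝ) * v i - ⌊(N₂ : ℝ) * v i⌋ := rfl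
  have key : ((N₂ - N₁ : ℕ) : ℝ) * v i - ((⌊(N₂ : ℝ) * v i⌋ - ⌊(N₁ : ℝ) * v i⌋ : ℤ) : ℝ)
      = Int.fract ((N₂ : ℝ) * v i) - Int.fract ((N₁ : ℝ) * v i) := by
    rw [Nat.cast_sub hlt.le, e1, e2]; push_cast; ring
  rw [key]
  rw [abs_sub_comm, ← mul_sub, abs_mul, abs_of_pos hM0] at habs
  have h3 : |Int.fract ((N₂:ℝ) * v i) - Int.fract ((N₁:ℝ) * v i)| < 1 / M := by
    rw [lt_div_iff₀ hM0]; linarith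
  have h4 : 1 / (M:ℝ) < η := by
    rw [div_lt_iff₀ hM0]
    calc (1:ℝ) = η * (1/η) := by field_simp
      _ < η * M := by exact mul_lt_mul_of_pos_left hM hη
  linarith

lemma infinite_simul {I : Type*} [Fintype I] (v : I → ℝ) {η : ℝ} (hη : 0 < η) :
    {N : ℕ | ∀ i, ∃ p : ℤ, |(N : ℝ) * v i - p| < η}.Infinite := by
  apply Set.infinite_of_not_bddAbove
  rw [not_bddAbove_iff]
  intro B
  obtain ⟨N₀, hN₀1, hN₀⟩ := exists_simul v (η := η / (B + 1)) (by positivity)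
  refine ⟨(B + 1) * N₀, fun i => ?_, by nlinarith⟩
  obtain ⟨p, hp⟩ := hN₀ i
  refine ⟨((B : ℤ) + 1) * p, ?_⟩
  have key : (((B+1)*N₀ : ℕ):ℝ) * v i - ((((B:ℤ)+1)*p : ℤ) : ℝ)
      = ((B:ℝ)+1) * ((N₀:ℝ)*v i - p) := by push_cast; ring
  rw [key, abs_mul, abs_of_pos (by positivity : (0:ℝ) < (B:ℝ)+1)]
  calc ((B:ℝ)+1) * |(N₀:ℝ) * v i - p| < ((B:ℝ)+1) * (η / (B+1)) :=
        mul_lt_mul_of_pos_left hp (by positivity)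
    _ = η := by field_simp

noncomputable section

theorem common_index_jump_selection
    (q : ℕ) (hq : 1 ≤ q) (ihat : Fin q → ℝ) (hpos : ∀ k, 0 < ihat k)
    (μ : Fin q → ℕ) (θ : (k : Fin q) → Fin (μ k) → ℝ)
    (hθ : ∀ k j, θ k j ∈ Set.Ioo 0 (2 * π))
    (δ : ℝ) (hδ : δ ∈ Set.Ioo 0 (1 / 2 : ℝ)) (ε : ℝ) (hε : 0 < ε) :
    {N : ℕ | ∀ k : Fin q, ∃ m : ℕ, 1 ≤ m ∧
      |(m : ℝ) * ihat k - (N : ℝ)| < ε ∧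
      (∀ j, min (Int.fract ((m : ℝ) * θ k j / π))
          (1 - Int.fract ((m : ℝ) * θ k j / π)) < δ) ∧
      (∀ j, (∃ r : ℚ, θ k j / π = (r : ℝ)) →
          ∃ z : ℤ, (m : ℝ) * θ k j / π = (z : ℝ))}.Infinite := by
  classical
  have hπ : (0:ℝ) < π := Real.pi_pos
  obtain ⟨hδ0, hδ2⟩ := hδ
  -- construct the integers L k clearing denominators of rational θ k j / π
  have hLex : ∀ k : Fin q, ∃ L : ℕ, 1 ≤ L ∧ ∀ j, (∃ r : ℚ, θ k j / π = (r:ℝ)) →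
      ∃ z : ℤ, (L : ℝ) * (θ k j / π) = (z : ℝ) := by
    intro k
    refine ⟨∏ j, (if h : ∃ r : ℚ, θ k j / π = (r:ℝ) then h.choose else 0).den, ?_, ?_⟩
    · exact Finset.one_le_prod' (fun j _ => (Rat.pos _))
    · intro j h
      have h1 : θ k j / π =
          ((if h' : ∃ r : ℚ, θ k j / π = (r:ℝ) then h'.choose else 0 : ℚ) : ℝ) := by
        rw [dif_pos h]; exact h.choose_spec
      set r : ℚ := (if h' : ∃ r : ℚ, θ k j / π = (r:ℝ) then h'.choose else 0) with hrdef
      refine ⟨r.num * ((∏ j' ∈ Finset.univ.erase j,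
          (if h' : ∃ r : ℚ, θ k j' / π = (r:ℝ) then h'.choose else 0).den : ℕ) : ℤ), ?_⟩
      rw [h1]
      have hsplit : r.den * (∏ j' ∈ Finset.univ.erase j,
            (if h' : ∃ r : ℚ, θ k j' / π = (r:ℝ) then h'.choose else 0).den)
          = ∏ j', (if h' : ∃ r : ℚ, θ k j' / π = (r:ℝ) then h'.choose else 0).den := by
        rw [hrdef]
        exact Finset.mul_prod_erase Finset.univ
          (fun j' => (if h' : ∃ r : ℚ, θ k j' / π = (r:ℝ) then h'.choose else 0).den)
          (Finset.mem_univ j)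
      rw [← hsplit]
      have hnum : (r:ℝ) * (r.den:ℝ) = (r.num:ℝ) := by exact_mod_cast Rat.mul_den_eq_num r
      push_cast
      linear_combination (∏ x ∈ Finset.univ.erase j,
        ((if h' : ∃ r : ℚ, θ k x / π = (r:ℝ) then h'.choose else 0).den : ℝ)) * hnum
  choose L hL1 hLr using hLex
  have hL0 : ∀ k, (0:ℝ) < L k := fun k => by exact_mod_cast (hL1 k)
  have hne : (Finset.univ : Finset (Fin q)).Nonempty := ⟨⟨0, hq⟩, Finset.mem_univ _⟩
  set c : Fin q → ℝ := fun k => min (ε / (L k * ihat k)) (δ / (1 + 2 * L k)) with hc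
  have hcpos : ∀ k, 0 < c k := fun k =>
    lt_min (div_pos hε (mul_pos (hL0 k) (hpos k))) (div_pos hδ0 (by positivity))
  set η : ℝ := (Finset.univ.inf' hne c) / 2 with hηdef
  have hinfpos : 0 < Finset.univ.inf' hne c := by
    rw [Finset.lt_inf'_iff]; exact fun k _ => hcpos k
  have hηpos : 0 < η := by positivity
  have hηlt : ∀ k, η < c k := fun k =>
    lt_of_lt_of_le (by rw [hηdef]; linarith) (Finset.inf'_le _ (Finset.mem_univ k))
  obtain ⟨B₀, hB₀⟩ := exists_nat_gt (Finset.univ.sup' hne (fun k => (1 + η) * ((L k : ℝ) * ihat k)))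
  have hB₀k : ∀ k, (1 + η) * ((L k : ℝ) * ihat k) < B₀ := fun k =>
    lt_of_le_of_lt (Finset.le_sup' (fun k => (1 + η) * ((L k : ℝ) * ihat k)) (Finset.mem_univ k)) hB₀
  set v : (Fin q ⊕ ((k : Fin q) × Fin (μ k))) → ℝ :=
    Sum.elim (fun k => 1 / (L k * ihat k)) (fun p => θ p.1 p.2 / (π * ihat p.1)) with hv
  have hS := infinite_simul v hηpos
  apply ((hS.diff (Set.finite_Iic B₀)).mono ?_)
  rintro N ⟨hN, hN2⟩
  have hNB : B₀ < N := by simpa using hN2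
  have hNB' : (B₀ : ℝ) < N := by exact_mod_cast hNB
  intro k
  have hA : (0:ℝ) < (L k : ℝ) * ihat k := mul_pos (hL0 k) (hpos k)
  set A : ℝ := (L k : ℝ) * ihat k with hAdef
  obtain ⟨p, hp⟩ := hN (Sum.inl k)
  have hp' : |(N:ℝ)/A - p| < η := by
    have : (N:ℝ) * v (Sum.inl k) = (N:ℝ)/A := by
      simp [hv, hAdef]; ring
    rwa [this] at hp
  have hNA : (1 + η) * A < N := lt_trans (hB₀k k) hNB'
  have hNb : 1 + η < (N:ℝ) / A := by rw [lt_div_iff₀ hA]; linarith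
  have hp1 : (1:ℝ) < p := by
    have := abs_lt.mp hp'
    linarith [this.1, this.2]
  have hp1' : 1 ≤ p := by exact_mod_cast hp1.le
  have hmp : ((L k * p.toNat : ℕ) : ℝ) = (L k : ℝ) * p := by
    have h0 : ((L k * p.toNat : ℕ) : ℤ) = (L k : ℤ) * p := by
      rw [Nat.cast_mul, Int.toNat_of_nonneg (by omega : (0:ℤ) ≤ p)]
    exact_mod_cast h0
  refine ⟨L k * p.toNat, Nat.one_le_iff_ne_zero.mpr (Nat.mul_ne_zero (by have := hL1 k; omega) (by omega)), ?_, ?_, ?_⟩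
  · -- |m * ihat - N| < ε
    rw [hmp]
    have heq : (L k : ℝ) * p * ihat k - N = A * ((p:ℝ) - N/A) := by
      rw [mul_sub, mul_div_cancel₀ _ hA.ne', hAdef]; ring
    have h5 : η < ε / A := lt_of_lt_of_le (hηlt k) (min_le_left _ _)
    calc |(L k : ℝ) * p * ihat k - N| = A * |(N:ℝ)/A - p| := by
          rw [heq, abs_mul, abs_of_pos hA, abs_sub_comm]
      _ < A * η := mul_lt_mul_of_pos_left hp' hA
      _ < ε := by rw [mul_comm]; exact (lt_div_iff₀ hA).mp h5
  · -- fract condition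
    intro j
    obtain ⟨z, hz⟩ := hN (Sum.inr ⟨k, j⟩)
    have hz' : |(N:ℝ) * (θ k j / (π * ihat k)) - z| < η := by
      simpa [hv] using hz
    obtain ⟨hθ0, hθ2⟩ := hθ k j
    have hα0 : 0 < (L k:ℝ) * θ k j / π := div_pos (mul_pos (hL0 k) hθ0) hπ
    have hα2 : (L k:ℝ) * θ k j / π < 2 * L k := by
      rw [div_lt_iff₀ hπ]; nlinarith [hL0 k]
    have key : ((L k * p.toNat : ℕ) : ℝ) * θ k j / π - z
        = ((p:ℝ) - (N:ℝ)/A) * ((L k:ℝ) * θ k j / π)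
          + ((N:ℝ) * (θ k j / (π * ihat k)) - z) := by
      rw [hmp, hAdef]
      field_simp [hπ.ne', (hpos k).ne', (hL0 k).ne']
      ring
    have h6 : η < δ / (1 + 2 * L k) := lt_of_lt_of_le (hηlt k) (min_le_right _ _)
    have h7 : η * (1 + 2 * (L k : ℝ)) < δ := by
      rw [← lt_div_iff₀ (by positivity)]; exact h6
    calc min (Int.fract (((L k * p.toNat : ℕ):ℝ) * θ k j / π))
          (1 - Int.fract (((L k * p.toNat : ℕ):ℝ) * θ k j / π))
        ≤ |((L k * p.toNat : ℕ):ℝ) * θ k j / π - z| := min_fract_le _ z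
      _ ≤ |(p:ℝ) - (N:ℝ)/A| * ((L k:ℝ) * θ k j / π)
          + |(N:ℝ) * (θ k j / (π * ihat k)) - z| := by
          rw [key]
          refine (abs_add_le _ _).trans ?_
          rw [abs_mul, abs_of_pos hα0]
      _ < η * (2 * L k) + η := by
          refine add_lt_add_of_lt_of_le ?_ hz'.le |>.trans_le le_rfl
          have h8 : |(p:ℝ) - (N:ℝ)/A| < η := by rwa [abs_sub_comm] at hp'
          exact mul_lt_mul'' h8 hα2 (abs_nonneg _) hα0.le
      _ < δ := by linarith
  · -- rational case
    intro j hrat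
    obtain ⟨z, hz⟩ := hLr k j hrat
    refine ⟨p * z, ?_⟩
    have : ((L k * p.toNat : ℕ) : ℝ) * θ k j / π = (p:ℝ) * ((L k:ℝ) * (θ k j / π)) := by
      rw [hmp]; ring
    rw [this, hz]; push_cast; ring

end
end
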